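/- Let f : [a,b] → ℝ be continuous, let E be the convex hull of {(x,y) : x ∈ [a,b], y ≥ f(x)}, and let g(x) = min{y : (x,y) ∈ E}. Then g is convex on [a,b], g ≤ f, g(a) = f(a), g(b) = f(b), and g is affine on every open interval contiguous to the contact set A = {x : g(x) = f(x)}. -/

import Mathlib

open Set

private lemma aff_convexOn (t : Set ℝ) (ht : Convex ℝ t) (p c q : ℝ) :
    ConvexOn ℝ t (fun x => p * (x - c) + q) := by
  refine ⟨ht, ?_⟩
  intro x _ y _ lam mu hlam hmu hsum
  simp only [smul_eq_mul]
  apply le_of_eq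
  linear_combination (p * c - q) * hsum

theorem convex_minorant_properties (a b : ℝ) (hab : a < b)
    (f : ℝ → ℝ) (hf : ContinuousOn f (Icc a b))
    (g : ℝ → ℝ)
    (hg : ∀ x ∈ Icc a b,
      g x = sInf {y : ℝ | ((x, y) : ℝ × ℝ) ∈
        convexHull ℝ {p : ℝ × ℝ | p.1 ∈ Icc a b ∧ f p.1 ≤ p.2}}) :
    ConvexOn ℝ (Icc a b) g ∧ (∀ x ∈ Icc a b, g x ≤ f x) ∧
      g a = f a ∧ g b = f b ∧
      (∀ x₁ ∈ {x ∈ Icc a b | g x = f x}, ∀ x₂ ∈ {x ∈ Icc a b | g x = f x},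
        x₁ < x₂ → Ioo x₁ x₂ ∩ {x ∈ Icc a b | g x = f x} = ∅ →
        ∀ x ∈ Ioo x₁ x₂,
          g x = g x₁ + (g x₂ - g x₁) / (x₂ - x₁) * (x - x₁)) := by
  have ha : a ∈ Icc a b := ⟨le_refl a, hab.le⟩
  have hb : b ∈ Icc a b := ⟨hab.le, le_refl b⟩
  set S : Set (ℝ × ℝ) := {p : ℝ × ℝ | p.1 ∈ Icc a b ∧ f p.1 ≤ p.2} with hSdef
  set E := convexHull ℝ S with hEdef
  -- minimum of f
  obtain ⟨c, hcmem, hcmin⟩ := isCompact_Icc.exists_isMinOn (nonempty_Icc.2 hab.le) hf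
  have hlow : E ⊆ {p : ℝ × ℝ | f c ≤ p.2} := by
    apply convexHull_min
    · rintro ⟨u, v⟩ ⟨hu, huv⟩
      exact le_trans (hcmin hu) huv
    · exact convex_halfSpace_ge (LinearMap.snd ℝ ℝ ℝ).isLinear (f c)
  have hne : ∀ x ∈ Icc a b, ((x, f x) : ℝ × ℝ) ∈ E := fun x hx =>
    subset_convexHull ℝ S ⟨hx, le_refl _⟩
  have hbdd : ∀ x : ℝ, BddBelow {y | ((x, y) : ℝ × ℝ) ∈ E} :=
    fun x => ⟨f c, fun y hy => hlow hy⟩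
  have hfib_ne : ∀ x ∈ Icc a b, Set.Nonempty {y | ((x, y) : ℝ × ℝ) ∈ E} :=
    fun x hx => ⟨f x, hne x hx⟩
  have hg_le_f : ∀ x ∈ Icc a b, g x ≤ f x := fun x hx => by
    rw [hg x hx]; exact csInf_le (hbdd x) (hne x hx)
  have hle_g : ∀ x ∈ Icc a b, ∀ y : ℝ, ((x, y) : ℝ × ℝ) ∈ E → g x ≤ y := fun x hx y hy => by
    rw [hg x hx]; exact csInf_le (hbdd x) hy
  -- fiber is convex
  have hfib_conv : ∀ x : ℝ, Convex ℝ {y | ((x, y) : ℝ × ℝ) ∈ E} := by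
    intro x y hy z hz lam mu hlam hmu hsum
    have h := (convex_convexHull ℝ S) hy hz hlam hmu hsum
    have he : lam • ((x, y) : ℝ × ℝ) + mu • ((x, z) : ℝ × ℝ) = (x, lam • y + mu • z) := by
      simp only [Prod.smul_mk, Prod.mk_add_mk, smul_eq_mul, Prod.mk.injEq]
      constructor
      · linear_combination x * hsum
      · trivial
    rwa [he] at h
  have hmem_of_lt : ∀ x ∈ Icc a b, ∀ y : ℝ, g x < y → ((x, y) : ℝ × ℝ) ∈ E := by
    intro x hx y hy
    rw [hg x hx] at hy
    obtain ⟨z, hz, hzy⟩ := exists_lt_of_csInf_lt (hfib_ne x hx) hy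
    have hw : ((x, max y (f x)) : ℝ × ℝ) ∈ E := subset_convexHull ℝ S ⟨hx, le_max_right _ _⟩
    exact (hfib_conv x).ordConnected.out hz hw ⟨hzy.le, le_max_left _ _⟩
  -- convexity of g
  have hgconv : ConvexOn ℝ (Icc a b) g := by
    refine ⟨convex_Icc a b, ?_⟩
    intro x hx y hy lam mu hlam hmu hsum
    have hxy : lam • x + mu • y ∈ Icc a b := (convex_Icc a b) hx hy hlam hmu hsum
    refine le_of_forall_pos_le_add ?_
    intro ε hε
    have h1 : ((x, g x + ε) : ℝ × ℝ) ∈ E := hmem_of_lt x hx _ (by linarith)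
    have h2 : ((y, g y + ε) : ℝ × ℝ) ∈ E := hmem_of_lt y hy _ (by linarith)
    have h := (convex_convexHull ℝ S) h1 h2 hlam hmu hsum
    have he : lam • ((x, g x + ε) : ℝ × ℝ) + mu • ((y, g y + ε) : ℝ × ℝ)
        = (lam • x + mu • y, lam * g x + mu * g y + ε) := by
      simp only [Prod.smul_mk, Prod.mk_add_mk, smul_eq_mul, Prod.mk.injEq]
      constructor
      · trivial
      · linear_combination ε * hsum
    rw [he] at h
    simpa using hle_g _ hxy _ h
  -- maximality of g among convex minorants
  have hmax : ∀ h : ℝ → ℝ, ConvexOn ℝ (Icc a b) h → (∀ x ∈ Icc a b, h x ≤ f x) →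
      ∀ x ∈ Icc a b, h x ≤ g x := by
    intro h hconv hhf x hx
    have hsub : E ⊆ {p : ℝ × ℝ | p.1 ∈ Icc a b ∧ h p.1 ≤ p.2} := by
      apply convexHull_min
      · rintro ⟨u, v⟩ ⟨hu, huv⟩
        exact ⟨hu, (hhf u hu).trans huv⟩
      · rintro ⟨u, v⟩ ⟨hu, huv⟩ ⟨u', v'⟩ ⟨hu', hu'v⟩ lam mu hlam hmu hsum
        refine ⟨(convex_Icc a b) hu hu' hlam hmu hsum, ?_⟩
        calc h (lam • u + mu • u') ≤ lam • h u + mu • h u' := hconv.2 hu hu' hlam hmu hsum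
          _ ≤ lam • v + mu • v' := by
              simp only [smul_eq_mul]
              gcongr <;> assumption
    rw [hg x hx]
    exact le_csInf (hfib_ne x hx) (fun y hy => (hsub hy).2)
  -- endpoint values
  have hga : g a = f a := by
    refine le_antisymm (hg_le_f a ha) ?_
    refine le_of_forall_pos_le_add ?_
    intro ε hε
    obtain ⟨δ, hδ, hδf⟩ := Metric.continuousWithinAt_iff.1 (hf a ha) ε hε
    set C : ℝ := max 0 ((f a - f c) / δ) with hCdef
    have hC0 : 0 ≤ C := le_max_left _ _
    have hC1 : f a - f c ≤ C * δ := by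
      have h' : (f a - f c) / δ ≤ C := le_max_right _ _
      calc f a - f c = (f a - f c) / δ * δ := by field_simp
        _ ≤ C * δ := by nlinarith
    have hlef : ∀ x ∈ Icc a b, (-C) * (x - a) + (f a - ε) ≤ f x := by
      intro x hx
      rcases lt_or_ge (x - a) δ with hd | hd
      · have := hδf hx (by rw [Real.dist_eq, abs_of_nonneg (by linarith [hx.1])]; exact hd)
        rw [Real.dist_eq, abs_lt] at this
        nlinarith [hx.1]
      · have h1 : C * δ ≤ C * (x - a) := by nlinarith
        have h2 : f c ≤ f x := hcmin hx
        nlinarith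
    have := hmax _ (aff_convexOn (Icc a b) (convex_Icc a b) (-C) a (f a - ε)) hlef a ha
    simpa using this
  have hgb : g b = f b := by
    refine le_antisymm (hg_le_f b hb) ?_
    refine le_of_forall_pos_le_add ?_
    intro ε hε
    obtain ⟨δ, hδ, hδf⟩ := Metric.continuousWithinAt_iff.1 (hf b hb) ε hε
    set C : ℝ := max 0 ((f b - f c) / δ) with hCdef
    have hC0 : 0 ≤ C := le_max_left _ _
    have hC1 : f b - f c ≤ C * δ := by
      have h' : (f b - f c) / δ ≤ C := le_max_right _ _
      calc f b - f c = (f b - f c) / δ * δ := by field_simp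
        _ ≤ C * δ := by nlinarith
    have hlef : ∀ x ∈ Icc a b, C * (x - b) + (f b - ε) ≤ f x := by
      intro x hx
      rcases lt_or_ge (b - x) δ with hd | hd
      · have := hδf hx (by rw [Real.dist_eq, abs_of_nonpos (by linarith [hx.2])]; linarith
          )
        rw [Real.dist_eq, abs_lt] at this
        nlinarith [hx.2]
      · have h1 : C * δ ≤ C * (b - x) := by nlinarith
        have h2 : f c ≤ f x := hcmin hx
        nlinarith
    have := hmax _ (aff_convexOn (Icc a b) (convex_Icc a b) C b (f b - ε)) hlef b hb
    simpa using this
  refine ⟨hgconv, hg_le_f, hga, hgb, ?_⟩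
  rintro x₁ ⟨hx₁I, hx₁c⟩ x₂ ⟨hx₂I, hx₂c⟩ hlt hempty x hx
  have h21 : (0:ℝ) < x₂ - x₁ := by linarith [hx.1, hx.2]
  set s : ℝ := (g x₂ - g x₁) / (x₂ - x₁) with hsdef
  set L : ℝ → ℝ := fun z => s * (z - x₁) + g x₁ with hLdef
  have hLx₁ : L x₁ = g x₁ := by simp [hLdef]
  have hLx₂ : L x₂ = g x₂ := by
    show s * (x₂ - x₁) + g x₁ = g x₂
    rw [hsdef]; field_simp; ring
  have hIccsub : Icc x₁ x₂ ⊆ Icc a b := Icc_subset_Icc hx₁I.1 hx₂I.2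
  -- inner chord inequality
  have hinner : ∀ z ∈ Icc x₁ x₂, g z ≤ L z := by
    intro z hz
    have hlam : 0 ≤ (x₂ - z) / (x₂ - x₁) := div_nonneg (by linarith [hz.2]) h21.le
    have hmu : 0 ≤ (z - x₁) / (x₂ - x₁) := div_nonneg (by linarith [hz.1]) h21.le
    have hsum : (x₂ - z) / (x₂ - x₁) + (z - x₁) / (x₂ - x₁) = 1 := by
      field_simp; ring
    have hpt : ((x₂ - z) / (x₂ - x₁)) • x₁ + ((z - x₁) / (x₂ - x₁)) • x₂ = z := by
      simp only [smul_eq_mul]; field_simp; ring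
    have h := hgconv.2 hx₁I hx₂I hlam hmu hsum
    rw [hpt] at h
    calc g z ≤ ((x₂ - z) / (x₂ - x₁)) • g x₁ + ((z - x₁) / (x₂ - x₁)) • g x₂ := h
      _ = L z := by
          show _ = s * (z - x₁) + g x₁
          simp only [smul_eq_mul, hsdef]; field_simp; ring
  -- outer chord inequality
  have houter : ∀ z ∈ Icc a b, z ≤ x₁ ∨ x₂ ≤ z → L z ≤ g z := by
    intro z hz hside
    have hgoal : ∀ u : ℝ, (g x₂ - g x₁) * (z - x₁) ≤ (g z - g x₁) * (x₂ - x₁) → L z ≤ g z := by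
      intro u hu
      show s * (z - x₁) + g x₁ ≤ g z
      rw [hsdef, div_mul_eq_mul_div, ← le_sub_iff_add_le, div_le_iff₀ h21]
      linarith [hu]
    rcases hside with hside | hside
    · rcases eq_or_lt_of_le hside with heq | hzlt
      · rw [heq, hLx₁]
      · have hz2 : (0:ℝ) < x₂ - z := by linarith
        have hlam : 0 ≤ (x₂ - x₁) / (x₂ - z) := div_nonneg h21.le hz2.le
        have hmu : 0 ≤ (x₁ - z) / (x₂ - z) := div_nonneg (by linarith) hz2.le
        have hsum : (x₂ - x₁) / (x₂ - z) + (x₁ - z) / (x₂ - z) = 1 := by field_simp; ring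
        have hpt : ((x₂ - x₁) / (x₂ - z)) • z + ((x₁ - z) / (x₂ - z)) • x₂ = x₁ := by
          simp only [smul_eq_mul]; field_simp; ring
        have h := hgconv.2 hz hx₂I hlam hmu hsum
        rw [hpt] at h
        simp only [smul_eq_mul] at h
        rw [div_mul_eq_mul_div, div_mul_eq_mul_div, ← add_div, le_div_iff₀ hz2] at h
        exact hgoal 0 (by nlinarith [h])
    · rcases eq_or_lt_of_le hside with heq | hzlt
      · rw [← heq, hLx₂]
      · have hz1 : (0:ℝ) < z - x₁ := by linarith
        have hlam : 0 ≤ (z - x₂) / (z - x₁) := div_nonneg (by linarith) hz1.le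
        have hmu : 0 ≤ (x₂ - x₁) / (z - x₁) := div_nonneg h21.le hz1.le
        have hsum : (z - x₂) / (z - x₁) + (x₂ - x₁) / (z - x₁) = 1 := by field_simp; ring
        have hpt : ((z - x₂) / (z - x₁)) • x₁ + ((x₂ - x₁) / (z - x₁)) • z = x₂ := by
          simp only [smul_eq_mul]; field_simp; ring
        have h := hgconv.2 hx₁I hz hlam hmu hsum
        rw [hpt] at h
        simp only [smul_eq_mul] at h
        rw [div_mul_eq_mul_div, div_mul_eq_mul_div, ← add_div, le_div_iff₀ hz1] at h
        exact hgoal 0 (by nlinarith [h])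
  -- minimum of f - L on [x₁, x₂]
  have hLcont : Continuous L := by
    show Continuous fun z => s * (z - x₁) + g x₁
    fun_prop
  have hDcont : ContinuousOn (fun z => f z - L z) (Icc x₁ x₂) :=
    (hf.mono hIccsub).sub hLcont.continuousOn
  obtain ⟨w, hw, hwmin⟩ := isCompact_Icc.exists_isMinOn (nonempty_Icc.2 hlt.le) hDcont
  have hnotin : ∀ z ∈ Icc a b, z ∉ Icc x₁ x₂ → L z ≤ g z := by
    intro z hz hzin
    rw [mem_Icc, not_and_or, not_le, not_le] at hzin
    rcases hzin with h' | h'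
    · exact houter z hz (Or.inl h'.le)
    · exact houter z hz (Or.inr h'.le)
  have hL_le_g : L x ≤ g x := by
    by_cases hcase : 0 ≤ f w - L w
    · -- L ≤ f on [x₁,x₂]; take h = g ⊔ L
      have hhf : ∀ z ∈ Icc a b, (g ⊔ L) z ≤ f z := by
        intro z hz
        rw [Pi.sup_apply]
        refine sup_le (hg_le_f z hz) ?_
        by_cases hzin : z ∈ Icc x₁ x₂
        · have := hwmin hzin
          simp only [mem_setOf_eq] at this
          linarith
        · exact (hnotin z hz hzin).trans (hg_le_f z hz)
      have hconvsup : ConvexOn ℝ (Icc a b) (g ⊔ L) :=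
        hgconv.sup (aff_convexOn (Icc a b) (convex_Icc a b) s x₁ (g x₁))
      have := hmax _ hconvsup hhf x (hIccsub (Ioo_subset_Icc_self hx))
      rw [Pi.sup_apply] at this
      exact le_trans (le_sup_right) this
    · -- shifted line touches f inside (x₁,x₂): contradiction with empty contact
      exfalso
      push_neg at hcase
      set m : ℝ := f w - L w with hmdef
      set l : ℝ → ℝ := fun z => s * (z - x₁) + (g x₁ + m) with hldef
      have hlL : ∀ z, l z = L z + m := by intro z; show _ = _ + _; simp [hldef, hLdef]; ring
      have hlf : ∀ z ∈ Icc a b, l z ≤ f z := by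
        intro z hz
        rw [hlL]
        by_cases hzin : z ∈ Icc x₁ x₂
        · have := hwmin hzin
          simp only [mem_setOf_eq] at this
          linarith
        · have := hnotin z hz hzin
          have := hg_le_f z hz
          linarith
      have hlg := hmax _ (aff_convexOn (Icc a b) (convex_Icc a b) s x₁ (g x₁ + m)) hlf
      have hwI : w ∈ Icc a b := hIccsub hw
      have hLw : L w = s * (w - x₁) + g x₁ := rfl
      have hfw : f w ≤ g w := by
        have h1 := hlg w hwI
        linarith [hmdef, hLw]
      have hgw : g w = f w := le_antisymm (hg_le_f w hwI) hfw
      have hwx₁ : w ≠ x₁ := by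
        intro hwe
        have h2 : f w - L w < 0 := by linarith [hmdef]
        rw [hwe, hLx₁, ← hx₁c] at h2
        linarith
      have hwx₂ : w ≠ x₂ := by
        intro hwe
        have h2 : f w - L w < 0 := by linarith [hmdef]
        rw [hwe, hLx₂, ← hx₂c] at h2
        linarith
      have : w ∈ Ioo x₁ x₂ ∩ {x ∈ Icc a b | g x = f x} :=
        ⟨⟨lt_of_le_of_ne hw.1 (Ne.symm hwx₁), lt_of_le_of_ne hw.2 hwx₂⟩, hwI, hgw⟩
      rw [hempty] at this
      exact this
  have : L x = g x₁ + (g x₂ - g x₁) / (x₂ - x₁) * (x - x₁) := by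
    show s * (x - x₁) + g x₁ = _
    rw [hsdef]; ring
  rw [← this]
  exact le_antisymm (hinner x (Ioo_subset_Icc_self hx)) hL_le_g
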